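/- arXiv:2511.17169 — 2 statements merged into one kernel-verified Lean document; each statement's English description precedes it below -/
import Mathlib

section
/- Let A be a finite-dimensional semisimple algebra over a field k of characteristic 0. Then every Hochschild 2-cocycle of A with values in A is a Hochschild 2-coboundary: if y : A × A → A is bilinear and satisfies a·y(b,c) − y(a·b,c) + y(a,b·c) − y(a,b)·c = 0 for all a,b,c ∈ A, then there exists a k-linear map f : A → A with y(a,b) = a·f(b) − f(a·b) + f(a)·b for all a,b ∈ A. -/
open LinearMap Module Finset

section aux
variable {k : Type*} [Field k] [CharZero k] {A : Type*} [Ring A] [Algebra k A]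
    [FiniteDimensional k A]

/-- An idempotent `k`-linear endomorphism with zero trace is zero (char 0). -/
lemma aux_idem_trace_zero (f : A →ₗ[k] A) (hf : f ∘ₗ f = f)
    (htr : LinearMap.trace k A f = 0) : f = 0 := by
  have hproj : IsProj (range f) f := by
    refine ⟨fun x => mem_range_self f x, ?_⟩
    rintro x ⟨z, rfl⟩
    simpa using LinearMap.congr_fun hf z
  have h := hproj.trace
  rw [htr] at h
  have h0 : finrank k (range f) = 0 := by exact_mod_cast h.symm
  have hbot : range f = ⊥ := Submodule.finrank_eq_zero.mp h0
  exact range_eq_bot.mp hbot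

/-- In a semisimple ring, a left ideal whose idempotents are all zero is zero. -/
lemma aux_ideal {A : Type*} [Ring A] [IsSemisimpleRing A] (I : Submodule A A)
    (hI : ∀ e ∈ I, e * e = e → e = 0) : ∀ x ∈ I, x = 0 := by
  obtain ⟨J, hJ⟩ := exists_isCompl I
  have h1 : (1 : A) ∈ I ⊔ J := by rw [hJ.sup_eq_top]; trivial
  obtain ⟨e, heI, w, hwJ, hew⟩ := Submodule.mem_sup.mp h1
  have hsum : e * e + e * w = e := by
    have : e * (e + w) = e * 1 := by rw [hew]
    simpa [mul_add] using this
  have he2 : e * e = e := by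
    have hmemI : e * e - e ∈ I := I.sub_mem (by simpa using I.smul_mem e heI) heI
    have heq : e * e - e = -(e * w) :=
      eq_neg_of_add_eq_zero_left (by rw [sub_add_eq_add_sub, hsum, sub_self])
    have hmemJ : e * e - e ∈ J := by
      rw [heq]; exact J.neg_mem (by simpa using J.smul_mem e hwJ)
    have : e * e - e ∈ I ⊓ J := ⟨hmemI, hmemJ⟩
    rw [hJ.inf_eq_bot, Submodule.mem_bot] at this
    exact sub_eq_zero.mp this
  have he0 : e = 0 := hI e heI he2
  have hw1 : w = 1 := by rw [he0, zero_add] at hew; exact hew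
  intro x hx
  have hxJ : x ∈ J := by
    have := J.smul_mem x (hw1 ▸ hwJ)
    simpa using this
  have : x ∈ I ⊓ J := ⟨hx, hxJ⟩
  rw [hJ.inf_eq_bot, Submodule.mem_bot] at this
  exact this

variable (k A) in
/-- trace form functional `a ↦ tr(L_a)`. -/
noncomputable def ttr : A →ₗ[k] k := (LinearMap.trace k A) ∘ₗ (LinearMap.mul k A)

lemma ttr_apply (a : A) : ttr k A a = LinearMap.trace k A (LinearMap.mulLeft k a) := by
  have : LinearMap.mul k A a = LinearMap.mulLeft k a := rfl
  simp [ttr, this]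

lemma ttr_mul_comm (a b : A) : ttr k A (a * b) = ttr k A (b * a) := by
  have h1 : LinearMap.mulLeft k (a * b) = LinearMap.mulLeft k a * LinearMap.mulLeft k b :=
    LinearMap.mulLeft_mul k A a b
  have h2 : LinearMap.mulLeft k (b * a) = LinearMap.mulLeft k b * LinearMap.mulLeft k a :=
    LinearMap.mulLeft_mul k A b a
  rw [ttr_apply, ttr_apply, h1, h2, LinearMap.trace_mul_comm]

variable (k A) in
/-- the trace bilinear form. -/
noncomputable def BB : LinearMap.BilinForm k A := (LinearMap.mul k A).compr₂ (ttr k A)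

lemma BB_apply (a b : A) : BB k A a b = ttr k A (a * b) := rfl

lemma BB_symm (a b : A) : BB k A a b = BB k A b a := by
  rw [BB_apply, BB_apply, ttr_mul_comm]

lemma BB_isSymm : (BB k A).IsSymm := ⟨fun a b => by
  simpa using BB_symm (k := k) a b⟩

lemma BB_nondeg [IsSemisimpleRing A] : (BB k A).Nondegenerate := by
  suffices hL : LinearMap.SeparatingLeft (BB k A) from
    ⟨hL, fun x hx => hL x fun a => by rw [BB_symm]; exact hx a⟩
  intro x hx
  let I : Submodule A A :=
    { carrier := {z | ∀ a : A, ttr k A (z * a) = 0}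
      add_mem' := fun hu hv a => by
        rw [add_mul, map_add]
        rw [hu a, hv a, add_zero]
      zero_mem' := fun a => by rw [zero_mul, map_zero]
      smul_mem' := fun c z hz a => by
        have : (c • z) * a = c * (z * a) := by rw [smul_eq_mul, mul_assoc]
        rw [this, ttr_mul_comm, mul_assoc]
        exact hz (a * c) }
  have hI : ∀ e ∈ I, e * e = e → e = 0 := by
    intro e heI he2
    have htr : LinearMap.trace k A (LinearMap.mulLeft k e) = 0 := by
      have h := heI e
      rw [he2] at h
      rwa [ttr_apply] at h
    have hcomp : LinearMap.mulLeft k e ∘ₗ LinearMap.mulLeft k e = LinearMap.mulLeft k e := by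
      rw [← LinearMap.mulLeft_mul]
      · rw [he2]
    have h0 := aux_idem_trace_zero _ hcomp htr
    calc e = LinearMap.mulLeft k e 1 := by simp
    _ = 0 := by rw [h0]; rfl
  have hxI : x ∈ I := fun a => hx a
  exact aux_ideal I hI x hxI

/-- nondegeneracy of the right-regular trace form. -/
lemma right_nondeg [IsSemisimpleRing A] (x : A)
    (hx : ∀ a : A, LinearMap.trace k A (LinearMap.mulRight k (x * a)) = 0) : x = 0 := by
  have tcyc : ∀ p q : A, LinearMap.trace k A (LinearMap.mulRight k (p * q))
      = LinearMap.trace k A (LinearMap.mulRight k (q * p)) := by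
    intro p q
    rw [LinearMap.mulRight_mul, LinearMap.mulRight_mul]
    exact LinearMap.trace_mul_comm k _ _
  let I : Submodule A A :=
    { carrier := {z | ∀ a : A, LinearMap.trace k A (LinearMap.mulRight k (z * a)) = 0}
      add_mem' := fun {u v} hu hv a => by
        have : (u + v) * a = u * a + v * a := add_mul u v a
        rw [this]
        have hmr : LinearMap.mulRight k (u * a + v * a)
            = LinearMap.mulRight k (u * a) + LinearMap.mulRight k (v * a) := by
          ext z; simp [mul_add, mul_assoc]
        rw [hmr, map_add, hu a, hv a, add_zero]
      zero_mem' := fun a => by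
        have : LinearMap.mulRight k ((0 : A) * a) = 0 := by ext z; simp
        rw [this, map_zero]
      smul_mem' := fun c z hz a => by
        have h1 : (c • z) * a = c * (z * a) := by rw [smul_eq_mul, mul_assoc]
        rw [h1, tcyc, mul_assoc]
        exact hz (a * c) }
  have hI : ∀ e ∈ I, e * e = e → e = 0 := by
    intro e heI he2
    have htr : LinearMap.trace k A (LinearMap.mulRight k e) = 0 := by
      have h := heI e
      rwa [he2] at h
    have hcomp : LinearMap.mulRight k e ∘ₗ LinearMap.mulRight k e = LinearMap.mulRight k e := by
      rw [← LinearMap.mulRight_mul, he2]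
    have h0 := aux_idem_trace_zero _ hcomp htr
    calc e = LinearMap.mulRight k e 1 := by simp
    _ = 0 := by rw [h0]; rfl
  exact aux_ideal I hI x hx

end aux
/-- for a finite-dimensional semisimple algebra `A` over a field `k` of
characteristic 0, every Hochschild 2-cocycle of `A` with values in `A` is a Hochschild
2-coboundary. -/
theorem stmt_4 {k : Type*} [Field k] [CharZero k] {A : Type*} [Ring A] [Algebra k A]
    [FiniteDimensional k A] [IsSemisimpleRing A]
    (y : A →ₗ[k] A →ₗ[k] A)
    (hy : ∀ a b c : A, a * y b c - y (a * b) c + y a (b * c) - y a b * c = 0) :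
    ∃ f : A →ₗ[k] A, ∀ a b : A, y a b = a * f b - f (a * b) + f a * b := by
  classical
  let b : Basis (Fin (finrank k A)) k A := Module.finBasis k A
  have hB : (BB k A).Nondegenerate := BB_nondeg
  let c : Basis (Fin (finrank k A)) k A := (BB k A).dualBasis hB b
  have hc : ∀ (x : A) i, c.repr x i = BB k A x (b i) := fun x i =>
    LinearMap.BilinForm.dualBasis_repr_apply hB b x i
  have hbc : ∀ i j, BB k A (b i) (c j) = if i = j then 1 else 0 := fun i j =>
    LinearMap.BilinForm.apply_dualBasis_right hB BB_isSymm b i j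
  have hE1 : ∀ x : A, ∑ i, BB k A x (b i) • c i = x := by
    intro x
    conv_rhs => rw [← c.sum_repr x]
    exact Finset.sum_congr rfl fun i _ => by rw [hc x i]
  have hE2 : ∀ x : A, ∑ i, BB k A (c i) x • b i = x := by
    intro x
    have hd : ∀ z : A, BB k A ((∑ i, BB k A (c i) x • b i) - x) z = 0 := by
      intro z
      conv_lhs => rw [← c.sum_repr z]
      rw [map_sum]
      refine Finset.sum_eq_zero fun j _ => ?_
      have hz : BB k A ((∑ i, BB k A (c i) x • b i) - x) (c j) = 0 := by
        simp only [map_sub, LinearMap.sub_apply, map_sum, LinearMap.sum_apply, map_smul,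
          LinearMap.smul_apply, smul_eq_mul]
        simp only [hbc, mul_ite, mul_one, mul_zero]
        rw [Finset.sum_ite_eq' Finset.univ j fun i => BB k A (c i) x]
        simp only [Finset.mem_univ, if_true]
        rw [BB_symm (c j) x, sub_self]
      rw [map_smul, hz, smul_zero]
    have := hB.1 _ hd
    exact (sub_eq_zero.mp this)
  have expand1 : ∀ (F : A →ₗ[k] A →ₗ[k] A) (p w : A),
      F p w = ∑ j, BB k A p (b j) • F (c j) w := by
    intro F p w
    conv_lhs => rw [← hE1 p]
    simp only [map_sum, map_smul, LinearMap.sum_apply, LinearMap.smul_apply]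
  have expand2 : ∀ (F : A →ₗ[k] A →ₗ[k] A) (p w : A),
      F p w = ∑ j, BB k A (c j) w • F p (b j) := by
    intro F p w
    conv_lhs => rw [← hE2 w]
    simp only [map_sum, map_smul]
  have hkey : ∀ (a : A) (i j), BB k A (a * c i) (b j) = BB k A (c i) (b j * a) := by
    intro a i j
    rw [BB_apply, BB_apply, mul_assoc, ttr_mul_comm, mul_assoc]
  have hflip : ∀ (F : A →ₗ[k] A →ₗ[k] A) (a : A),
      ∑ i, F (a * c i) (b i) = ∑ i, F (c i) (b i * a) := by
    intro F a
    calc ∑ i, F (a * c i) (b i)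
        = ∑ i, ∑ j, BB k A (a * c i) (b j) • F (c j) (b i) :=
          Finset.sum_congr rfl fun i _ => expand1 F (a * c i) (b i)
      _ = ∑ i, ∑ j, BB k A (c i) (b j * a) • F (c j) (b i) := by
          exact Finset.sum_congr rfl fun i _ => Finset.sum_congr rfl fun j _ => by
            rw [hkey a i j]
      _ = ∑ j, ∑ i, BB k A (c i) (b j * a) • F (c j) (b i) := Finset.sum_comm
      _ = ∑ j, F (c j) (b j * a) := by
          exact Finset.sum_congr rfl fun j _ => (expand2 F (c j) (b j * a)).symm
  have hrepr : ∀ (x : A) (i), b.repr x i = BB k A (c i) x := by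
    intro x i
    have h := congrFun (b.repr_sum_self (fun j => BB k A (c j) x)) i
    rw [hE2 x] at h
    exact h
  have htraceR : ∀ v : A, LinearMap.trace k A (LinearMap.mulRight k v)
      = ttr k A ((∑ i, c i * b i) * v) := by
    intro v
    rw [LinearMap.trace_eq_matrix_trace k b, Matrix.trace]
    simp only [Matrix.diag, LinearMap.toMatrix_apply, LinearMap.mulRight_apply]
    calc ∑ i, b.repr (b i * v) i = ∑ i, BB k A (c i) (b i * v) :=
          Finset.sum_congr rfl fun i _ => hrepr _ i
      _ = ∑ i, ttr k A ((c i * b i) * v) := by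
          exact Finset.sum_congr rfl fun i _ => by rw [BB_apply, mul_assoc]
      _ = ttr k A ((∑ i, c i * b i) * v) := by rw [Finset.sum_mul, map_sum]
  set u : A := ∑ i, c i * b i with hu_def
  have hu_inj : ∀ x : A, u * x = 0 → x = 0 := by
    intro x hux
    refine right_nondeg (k := k) x fun a => ?_
    rw [htraceR (x * a), ← mul_assoc, hux, zero_mul, map_zero]
  have hucen : ∀ a : A, a * u = u * a := by
    intro a
    have h := hflip (LinearMap.mul k A) a
    simp only [LinearMap.mul_apply'] at h
    calc a * u = ∑ i, (a * c i) * b i := by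
          rw [hu_def, Finset.mul_sum]
          exact Finset.sum_congr rfl fun i _ => (mul_assoc _ _ _).symm
      _ = ∑ i, c i * (b i * a) := h
      _ = u * a := by
          rw [hu_def, Finset.sum_mul]
          exact Finset.sum_congr rfl fun i _ => (mul_assoc _ _ _).symm
  have hsurj : Function.Surjective (LinearMap.mulLeft k u) := by
    rw [← LinearMap.injective_iff_surjective]
    intro p q hpq
    simp only [LinearMap.mulLeft_apply] at hpq
    have h0 : u * (p - q) = 0 := by rw [mul_sub, hpq, sub_self]
    exact sub_eq_zero.mp (hu_inj _ h0)
  obtain ⟨v, hv⟩ := hsurj 1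
  have huv : u * v = 1 := hv
  have hvu : v * u = 1 := by
    apply sub_eq_zero.mp
    apply hu_inj
    rw [mul_sub, ← mul_assoc, huv, one_mul, mul_one, sub_self]
  have hvcen : ∀ a : A, a * v = v * a := by
    intro a
    have h0 : u * (v * a - a * v) = 0 := by
      rw [mul_sub, ← mul_assoc, huv, one_mul, ← mul_assoc, ← hucen a, mul_assoc, huv,
        mul_one, sub_self]
    exact (sub_eq_zero.mp (hu_inj _ h0)).symm
  have hx1 : ∑ i, (v * c i) * b i = 1 := by
    calc ∑ i, (v * c i) * b i = v * u := by
          rw [hu_def, Finset.mul_sum]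
          exact Finset.sum_congr rfl fun i _ => mul_assoc _ _ _
      _ = 1 := hvu
  have hflip' : ∀ (F : A →ₗ[k] A →ₗ[k] A) (a : A),
      ∑ i, F (a * (v * c i)) (b i) = ∑ i, F (v * c i) (b i * a) := by
    intro F a
    have h := hflip (F ∘ₗ LinearMap.mulLeft k v) a
    simp only [LinearMap.comp_apply, LinearMap.mulLeft_apply] at h
    refine Eq.trans ?_ h
    exact Finset.sum_congr rfl fun i _ => by
      rw [← mul_assoc a v (c i), hvcen a, mul_assoc]
  -- the candidate maps
  set f : A →ₗ[k] A := ∑ i, (LinearMap.mulLeft k (v * c i)) ∘ₗ (y (b i)) with hf_def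
  set g : A →ₗ[k] A := ∑ i, (y (v * c i)) ∘ₗ (LinearMap.mulLeft k (b i)) with hg_def
  have hf : ∀ z : A, f z = ∑ i, (v * c i) * (y (b i) z) := by
    intro z
    rw [hf_def]
    simp [LinearMap.sum_apply, LinearMap.comp_apply, LinearMap.mulLeft_apply, mul_assoc]
  have hg : ∀ z : A, g z = ∑ i, y (v * c i) (b i * z) := by
    intro z
    rw [hg_def]
    simp [LinearMap.sum_apply, LinearMap.comp_apply, LinearMap.mulLeft_apply]
  have hcoc : ∀ p q r : A, p * y q r = y (p * q) r - y p (q * r) + y p q * r := by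
    intro p q r
    have h := hy p q r
    have h2 : p * y q r = p * y q r
        - (p * y q r - y (p * q) r + y p (q * r) - y p q * r) := by rw [h, sub_zero]
    rw [h2]; abel
  have hyfirst : ∀ (s : Finset (Fin (finrank k A))) (p : Fin (finrank k A) → A) (z : A),
      ∑ i ∈ s, y (p i) z = y (∑ i ∈ s, p i) z := by
    intro s p z
    have := map_sum (y.flip z) p s
    simpa using this.symm
  have hstar : ∀ a z : A, a * f z = y a z - g (a * z) + g a * z := by
    intro a z
    have e1 : a * f z = ∑ i, (a * (v * c i)) * (y (b i) z) := by
      rw [hf z, Finset.mul_sum]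
      exact Finset.sum_congr rfl fun i _ => (mul_assoc _ _ _).symm
    have e2 : ∑ i, (a * (v * c i)) * (y (b i) z) = ∑ i, (v * c i) * (y (b i * a) z) := by
      have h := hflip' ((LinearMap.mul k A).compl₂ (y.flip z)) a
      simpa only [LinearMap.compl₂_apply, LinearMap.mul_apply', LinearMap.flip_apply] using h
    have e3 : ∑ i, (v * c i) * (y (b i * a) z)
        = ∑ i, (y ((v * c i) * (b i * a)) z - y (v * c i) ((b i * a) * z)
            + y (v * c i) (b i * a) * z) :=
      Finset.sum_congr rfl fun i _ => hcoc _ _ _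
    have e4 : ∑ i, ((v * c i) * (b i * a)) = a := by
      calc ∑ i, (v * c i) * (b i * a) = (∑ i, (v * c i) * b i) * a := by
            rw [Finset.sum_mul]
            exact Finset.sum_congr rfl fun i _ => (mul_assoc _ _ _).symm
        _ = a := by rw [hx1, one_mul]
    rw [e1, e2, e3, Finset.sum_add_distrib, Finset.sum_sub_distrib]
    congr 1
    · congr 1
      · rw [hyfirst, e4]
      · rw [hg (a * z)]
        exact Finset.sum_congr rfl fun i _ => by rw [mul_assoc]
    · rw [hg a, Finset.sum_mul]
  set w : A := ∑ i, y (v * c i) (b i) with hw_def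
  have hone : ∀ z : A, y 1 z = y 1 1 * z := by
    intro z
    have h := hy 1 1 z
    simp only [one_mul, sub_self, zero_add] at h
    exact sub_eq_zero.mp h
  have hW : ∀ z : A, f z + g z = (y 1 1 + w) * z := by
    intro z
    rw [hf z, hg z, ← Finset.sum_add_distrib]
    have e : ∀ i, (v * c i) * y (b i) z + y (v * c i) (b i * z)
        = y ((v * c i) * b i) z + y (v * c i) (b i) * z := by
      intro i
      have h := hcoc (v * c i) (b i) z
      rw [h]; abel
    calc ∑ i, ((v * c i) * y (b i) z + y (v * c i) (b i * z))
        = ∑ i, (y ((v * c i) * b i) z + y (v * c i) (b i) * z) :=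
          Finset.sum_congr rfl fun i _ => e i
      _ = (∑ i, y ((v * c i) * b i) z) + (∑ i, y (v * c i) (b i)) * z := by
          rw [Finset.sum_add_distrib, Finset.sum_mul]
      _ = y 1 z + w * z := by rw [hyfirst, hx1, hw_def]
      _ = (y 1 1 + w) * z := by rw [hone z, add_mul]
  refine ⟨f, fun a z => ?_⟩
  have h1 := hstar a z
  have h2 : f (a * z) = (y 1 1 + w) * (a * z) - g (a * z) := by
    rw [← hW (a * z)]; abel
  have h3 : f a = (y 1 1 + w) * a - g a := by
    rw [← hW a]; abel
  rw [h1, h2, h3, sub_mul, mul_assoc]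
  abel
end

section
/- Let A be a finite-dimensional semisimple algebra of dimension n over a field k of characteristic 0. Then every k-linear derivation of A is inner (of the form b ↦ ab − ba for some a ∈ A), and consequently dim_k Der_k(A) = n − dim_k Z(A), where Z(A) is the center of A. -/
open LinearMap

section Aux

variable {k : Type*} [Field k] {A : Type*} [Ring A] [Algebra k A] [FiniteDimensional k A]

/-- The trace form of the left regular representation. -/
noncomputable def tauForm (k A : Type*) [Field k] [Ring A] [Algebra k A]
    [FiniteDimensional k A] : LinearMap.BilinForm k A :=
  (LinearMap.mul k A).compr₂ ((LinearMap.trace k A).comp (Algebra.lmul k A).toLinearMap)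

lemma tauForm_apply (a b : A) :
    tauForm k A a b = LinearMap.trace k A (Algebra.lmul k A (a * b)) := rfl

lemma tauForm_comm (a b : A) : tauForm k A a b = tauForm k A b a := by
  simp only [tauForm_apply, map_mul]
  exact LinearMap.trace_mul_comm k _ _

lemma tauForm_assoc (a b c : A) : tauForm k A (a * b) c = tauForm k A a (b * c) := by
  simp only [tauForm_apply, mul_assoc]

end Aux

section Nondeg

variable {k : Type*} [Field k] [CharZero k] {A : Type*} [Ring A] [Algebra k A]
  [FiniteDimensional k A] [IsSemisimpleRing A]

lemma tauForm_nondeg : (tauForm k A).Nondegenerate := by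
  classical
  -- the radical of the trace form, as a left ideal of `A`
  let W : Submodule A A :=
    { carrier := {x | ∀ a : A, tauForm k A x a = 0}
      add_mem' := by
        intro x y hx hy a
        simp only [Set.mem_setOf_eq, map_add, LinearMap.add_apply] at *
        rw [hx a, hy a, add_zero]
      zero_mem' := by intro a; simp
      smul_mem' := by
        intro c x hx a
        have : tauForm k A (c * x) a = tauForm k A x (a * c) := by
          rw [tauForm_assoc, tauForm_comm, tauForm_assoc]
        simpa [smul_eq_mul, this] using hx (a * c) }
  obtain ⟨J, hJ⟩ := exists_isCompl W
  have h1 : (1 : A) ∈ W ⊔ J := by rw [hJ.sup_eq_top]; trivial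
  obtain ⟨e, he, f, hf, hef⟩ := Submodule.mem_sup.mp h1
  -- `e` is idempotent
  have hee : e * e + e * f = e := by rw [← mul_add, hef, mul_one]
  have hsub : e - e * e ∈ W ⊓ J := by
    constructor
    · exact W.sub_mem he (by simpa [smul_eq_mul] using W.smul_mem e he)
    · have : e - e * e = e * f := by rw [sub_eq_iff_eq_add']; exact hee.symm
      rw [this]
      simpa [smul_eq_mul] using J.smul_mem e hf
  rw [hJ.inf_eq_bot, Submodule.mem_bot, sub_eq_zero] at hsub
  -- left multiplication by `e` is a projection, so its trace is a natural number
  have hproj : LinearMap.IsProj (LinearMap.range (Algebra.lmul k A e))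
      (Algebra.lmul k A e) := by
    constructor
    · intro x; exact LinearMap.mem_range_self _ x
    · rintro x ⟨y, rfl⟩
      show e * (e * y) = e * y
      rw [← mul_assoc, ← hsub]
  have htr0 : LinearMap.trace k A (Algebra.lmul k A e) = 0 := by
    have := he (1 : A)
    simpa [tauForm_apply] using this
  have hfr : (Module.finrank k (LinearMap.range (Algebra.lmul k A e)) : k) = 0 := by
    rw [← hproj.trace, htr0]
  have hrange : LinearMap.range (Algebra.lmul k A e) = ⊥ := by
    rw [← Submodule.finrank_eq_zero]
    exact_mod_cast hfr
  have he0 : e = 0 := by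
    have : e ∈ LinearMap.range (Algebra.lmul k A e) :=
      ⟨1, by simp⟩
    rw [hrange, Submodule.mem_bot] at this
    exact this
  -- hence `J = ⊤` and the radical is trivial
  have hf1 : (1 : A) ∈ J := by rw [← hef, he0, zero_add]; exact hf
  have hJtop : J = ⊤ := by
    rw [eq_top_iff]
    intro a _
    simpa [smul_eq_mul] using J.smul_mem a hf1
  have hW : W = ⊥ := by
    have := hJ.inf_eq_bot
    rwa [hJtop, inf_top_eq] at this
  have hL : LinearMap.SeparatingLeft (tauForm k A) := by
    intro x hx
    have : x ∈ W := hx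
    rw [hW, Submodule.mem_bot] at this
    exact this
  exact ⟨hL, fun y hy => hL y fun x => by rw [tauForm_comm]; exact hy x⟩

end Nondeg

section Inner

variable {k : Type*} [Field k] [CharZero k] {A : Type*} [Ring A] [Algebra k A]
  [FiniteDimensional k A] [IsSemisimpleRing A]

lemma deriv_inner (D : A →ₗ[k] A) (hD : ∀ a b : A, D (a * b) = D a * b + a * D b) :
    ∃ a : A, ∀ b : A, D b = a * b - b * a := by
  classical
  set B := tauForm k A with hBdef
  have hB : B.Nondegenerate := tauForm_nondeg
  set bb : Module.Basis (Fin (Module.finrank k A)) k A := Module.finBasis k A with hbb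
  set y : Module.Basis (Fin (Module.finrank k A)) k A := B.dualBasis hB bb with hy
  have hsymm : ∀ u v : A, B u v = B v u := tauForm_comm
  have hass : ∀ u v w : A, B (u * v) w = B u (v * w) := tauForm_assoc
  have hdual : ∀ i j, B (y i) (bb j) = if j = i then 1 else 0 := fun i j =>
    B.apply_dualBasis_left hB bb i j
  -- expansion in the dual basis
  have exp1 : ∀ z : A, z = ∑ i, B z (bb i) • y i := by
    intro z
    conv_lhs => rw [← y.sum_repr z]
    refine Finset.sum_congr rfl fun i _ => ?_
    rw [LinearMap.BilinForm.dualBasis_repr_apply]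
  -- the coordinates along `bb` are given by pairing with `y`
  have hrepr : ∀ (z : A) (i : _), bb.repr z i = B z (y i) := by
    intro z i
    conv_rhs => rw [← bb.sum_repr z]
    rw [map_sum, LinearMap.sum_apply]
    simp only [map_smul, LinearMap.smul_apply]
    rw [Finset.sum_eq_single i]
    · rw [hsymm, hdual, if_pos rfl, smul_eq_mul, mul_one]
    · intro j _ hj
      rw [hsymm, hdual, if_neg hj, smul_eq_mul, mul_zero]
    · intro h; exact absurd (Finset.mem_univ i) h
  have exp2 : ∀ z : A, z = ∑ i, B z (y i) • bb i := by
    intro z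
    conv_lhs => rw [← bb.sum_repr z]
    refine Finset.sum_congr rfl fun i _ => ?_
    rw [hrepr]
  -- the Casimir identity
  have casimir : ∀ (φ : A →ₗ[k] A →ₗ[k] A) (a : A),
      ∑ i, φ (a * bb i) (y i) = ∑ i, φ (bb i) (y i * a) := by
    intro φ a
    calc ∑ i, φ (a * bb i) (y i)
        = ∑ i, ∑ j, B (a * bb i) (y j) • φ (bb j) (y i) := by
          refine Finset.sum_congr rfl fun i _ => ?_
          conv_lhs => rw [exp2 (a * bb i)]
          rw [map_sum, LinearMap.sum_apply]
          simp only [map_smul, LinearMap.smul_apply]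
      _ = ∑ i, ∑ j, B (y j * a) (bb i) • φ (bb j) (y i) := by
          refine Finset.sum_congr rfl fun i _ => Finset.sum_congr rfl fun j _ => ?_
          rw [hsymm (a * bb i) (y j), ← hass]
      _ = ∑ j, ∑ i, B (y j * a) (bb i) • φ (bb j) (y i) := Finset.sum_comm
      _ = ∑ j, φ (bb j) (y j * a) := by
          refine Finset.sum_congr rfl fun j _ => ?_
          conv_rhs => rw [exp1 (y j * a)]
          rw [map_sum]
          simp only [map_smul]
  -- the Casimir element is 1
  have hc1 : ∑ i, bb i * y i = (1 : A) := by
    have key : ∀ z : A, B z ((∑ i, bb i * y i) - 1) = 0 := by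
      intro z
      rw [map_sub, map_sum]
      have h2 : ∀ i : Fin (Module.finrank k A), B z (bb i * y i) = bb.repr (z * bb i) i := by
        intro i
        rw [hrepr, ← hass]
      have htr : B z 1 = ∑ i, bb.repr (z * bb i) i := by
        have h3 : B z 1 = LinearMap.trace k A (Algebra.lmul k A z) := by
          rw [hBdef, tauForm_apply, mul_one]
        rw [h3, LinearMap.trace_eq_matrix_trace k bb, Matrix.trace]
        refine Finset.sum_congr rfl fun i _ => ?_
        rw [Matrix.diag_apply, LinearMap.toMatrix_apply]
        rfl
      rw [htr]
      rw [sub_eq_zero]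
      exact Finset.sum_congr rfl fun i _ => h2 i
    have := hB.1 _ (fun z => by rw [hsymm]; exact key z)
    rwa [sub_eq_zero] at this
  -- conclude
  set m : A := ∑ i, bb i * D (y i) with hm
  have main : ∀ a : A, a * m = m * a + D a := by
    intro a
    have h1 : a * m = ∑ i, (a * bb i) * D (y i) := by
      rw [hm, Finset.mul_sum]
      exact Finset.sum_congr rfl fun i _ => by rw [mul_assoc]
    have h2 : ∑ i, (a * bb i) * D (y i) = ∑ i, bb i * D (y i * a) :=
      casimir ((LinearMap.mul k A).compl₂ D) a
    rw [h1, h2]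
    have h3 : ∀ i : Fin (Module.finrank k A),
        bb i * D (y i * a) = (bb i * D (y i)) * a + (bb i * y i) * D a := by
      intro i
      rw [hD (y i) a, mul_add, mul_assoc, mul_assoc]
    calc ∑ i, bb i * D (y i * a)
        = (∑ i, (bb i * D (y i)) * a) + ∑ i, (bb i * y i) * D a := by
          rw [← Finset.sum_add_distrib]
          exact Finset.sum_congr rfl fun i _ => h3 i
      _ = m * a + D a := by
          rw [← Finset.sum_mul, ← Finset.sum_mul, ← hm, hc1, one_mul]
  refine ⟨-m, fun b => ?_⟩
  have := main b
  have : D b = b * m - m * b := by rw [eq_sub_iff_add_eq, add_comm]; exact this.symm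
  rw [this, neg_mul, mul_neg, sub_neg_eq_add, neg_add_eq_sub]

end Inner



/-- The space `Der_k(A)` of `k`-linear derivations of `A`, as a `k`-submodule of
`End_k(A)`. -/
def derModule (k A : Type*) [Field k] [Ring A] [Algebra k A] :
    Submodule k (A →ₗ[k] A) where
  carrier := {D | ∀ a b : A, D (a * b) = D a * b + a * D b}
  zero_mem' := by intro a b; simp
  add_mem' := by
    intro D E hD hE a b
    simp only [LinearMap.add_apply, hD a b, hE a b, mul_add, add_mul]
    abel
  smul_mem' := by
    intro s D hD a b
    simp only [LinearMap.smul_apply, hD a b, Algebra.mul_smul_comm, Algebra.smul_mul_assoc,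
      smul_add]

/-- for a finite-dimensional semisimple algebra `A` of dimension `n` over a
field `k` of characteristic 0, every `k`-linear derivation of `A` is inner, and
consequently `dim_k Der_k(A) = n − dim_k Z(A)` where `Z(A)` is the center of `A`. -/
theorem stmt_6 {k : Type*} [Field k] [CharZero k] {A : Type*} [Ring A] [Algebra k A]
    [FiniteDimensional k A] [IsSemisimpleRing A] {n : ℕ} (hn : Module.finrank k A = n) :
    (∀ D : A →ₗ[k] A, (∀ a b : A, D (a * b) = D a * b + a * D b) →
      ∃ a : A, ∀ b : A, D b = a * b - b * a) ∧
    Module.finrank k (derModule k A) = n - Module.finrank k (Subalgebra.center k A) := by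
  refine ⟨fun D hD => deriv_inner D hD, ?_⟩
  set ad : A →ₗ[k] (A →ₗ[k] A) := LinearMap.mul k A - (LinearMap.mul k A).flip with had
  have had_apply : ∀ (a b : A), ad a b = a * b - b * a := by
    intro a b
    simp [had, LinearMap.sub_apply, LinearMap.flip_apply, LinearMap.mul_apply']
  have hrange : LinearMap.range ad = derModule k A := by
    apply le_antisymm
    · rintro D ⟨a, rfl⟩
      intro x z
      simp only [had_apply]
      noncomm_ring
    · intro D hD
      obtain ⟨a, ha⟩ := deriv_inner D (hD : ∀ x z : A, D (x * z) = D x * z + x * D z)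
      exact ⟨a, by ext b; rw [had_apply, ← ha b]⟩
  have hker : LinearMap.ker ad = Subalgebra.toSubmodule (Subalgebra.center k A) := by
    ext a
    simp only [LinearMap.mem_ker, Subalgebra.mem_toSubmodule, Subalgebra.mem_center_iff]
    constructor
    · intro h b
      have := congrArg (fun f => f b) h
      simp only [had_apply, LinearMap.zero_apply] at this
      rw [← sub_eq_zero]
      rw [sub_eq_zero] at this
      rw [this]
      simp
    · intro h
      ext b
      rw [had_apply, LinearMap.zero_apply, h b, sub_self]
  have hrn : Module.finrank k (LinearMap.range ad) + Module.finrank k (LinearMap.ker ad)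
      = Module.finrank k A := LinearMap.finrank_range_add_finrank_ker ad
  have h1 : Module.finrank k (derModule k A) = Module.finrank k (LinearMap.range ad) := by
    rw [hrange]
  have h2 : Module.finrank k (Subalgebra.center k A)
      = Module.finrank k (LinearMap.ker ad) := by rw [hker]; rfl
  rw [h1, h2, ← hn, ← hrn]
  omega
end
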